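/- For any p ∈ C¹(ℝ) with p(-∞) = 1, p(+∞) = 0, the energy ∫_ℝ (|p'(s)|²/2 + W(p(s))) ds is at least ∫_ℝ (|q'(s)|²/2 + W(q(s))) ds, where q(t) = (1/2)(1 - tanh(t/2)) and W(s) = (1/2)s²(1-s)²; i.e., q is a minimizer of the one-dimensional Allen-Cahn energy among profiles connecting 1 to 0. -/

import Mathlib

open MeasureTheory

noncomputable def q (t : ℝ) : ℝ := (1/2) * (1 - Real.tanh (t/2))

noncomputable def W (s : ℝ) : ℝ := (1/2) * s^2 * (1-s)^2

namespace AllenCahnAux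

open Real Filter Set

lemma q_eq (t : ℝ) : q t = (1 + Real.exp t)⁻¹ := by
  have h0 : Real.exp (t/2) ≠ 0 := (Real.exp_pos _).ne'
  have h1 : Real.exp (t/2) + Real.exp (-(t/2)) ≠ 0 := by positivity
  have h2 : (1 : ℝ) + Real.exp t ≠ 0 := by positivity
  have h3 : Real.exp t = Real.exp (t/2) * Real.exp (t/2) := by
    rw [← Real.exp_add]; ring_nf
  unfold q
  rw [Real.tanh_eq_sinh_div_cosh, Real.sinh_eq, Real.cosh_eq]
  rw [Real.exp_neg] at *
  field_simp
  field_simp at h3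
  nlinarith [Real.exp_pos (t/2), h3]

lemma q_fun_eq : q = fun t => (1 + Real.exp t)⁻¹ := funext q_eq

lemma ne_zero (t : ℝ) : (1 : ℝ) + Real.exp t ≠ 0 := by positivity

lemma hq_deriv (t : ℝ) : HasDerivAt q (-(Real.exp t / (1 + Real.exp t)^2)) t := by
  rw [q_fun_eq]
  have := ((Real.hasDerivAt_exp t).const_add 1).inv (ne_zero t)
  exact (by simpa [neg_div] using this : HasDerivAt (fun x => 1 + Real.exp x)⁻¹ _ t)

lemma deriv_q (t : ℝ) : deriv q t = -(Real.exp t / (1 + Real.exp t)^2) :=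
  (hq_deriv t).deriv

/-- the exact energy density of `q` -/
noncomputable def E (t : ℝ) : ℝ := (Real.exp t)^2 / (1 + Real.exp t)^4

lemma integrand_q (s : ℝ) : (deriv q s)^2 / 2 + W (q s) = E s := by
  rw [deriv_q, q_eq, W, E]
  have h2 : (1 : ℝ) + Real.exp s ≠ 0 := ne_zero s
  field_simp
  ring

noncomputable def g (t : ℝ) : ℝ := -((q t)^2/2 - (q t)^3/3)

lemma hg_deriv (t : ℝ) : HasDerivAt g (E t) t := by
  have h1 := hq_deriv t
  have h2 : HasDerivAt (fun u : ℝ => -(u^2/2 - u^3/3)) (-(q t - (q t)^2)) (q t) := by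
    have := (((hasDerivAt_pow 2 (q t)).div_const 2).sub
      ((hasDerivAt_pow 3 (q t)).div_const 3)).neg
    exact this.congr_deriv (by norm_num)
  have h3 := h2.comp t h1
  refine h3.congr_deriv ?_
  rw [q_eq, E]
  have h4 : (1 : ℝ) + Real.exp t ≠ 0 := ne_zero t
  field_simp
  ring

lemma q_top : Tendsto q atTop (nhds 0) := by
  rw [q_fun_eq]
  exact (tendsto_atTop_add_const_left _ 1 Real.tendsto_exp_atTop).inv_tendsto_atTop

lemma q_bot : Tendsto q atBot (nhds 1) := by
  rw [q_fun_eq]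
  have := (tendsto_const_nhds.add Real.tendsto_exp_atBot).inv₀ (by norm_num : (1:ℝ) + 0 ≠ 0)
  simpa using this

lemma g_top : Tendsto g atTop (nhds 0) := by
  have hc : Continuous (fun u : ℝ => -(u^2/2 - u^3/3)) := by continuity
  have h := (hc.tendsto 0).comp q_top
  have : g = (fun u : ℝ => -(u^2/2 - u^3/3)) ∘ q := rfl
  rw [this]
  simpa using h

lemma g_bot : Tendsto g atBot (nhds (-(1/6))) := by
  have hc : Continuous (fun u : ℝ => -(u^2/2 - u^3/3)) := by continuity
  have h := (hc.tendsto 1).comp q_bot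
  have hg : g = (fun u : ℝ => -(u^2/2 - u^3/3)) ∘ q := rfl
  rw [hg]
  convert h using 2
  norm_num

lemma E_cont : Continuous E := by
  apply Continuous.div (by continuity) (by continuity)
  intro x; positivity

lemma E_nonneg (t : ℝ) : 0 ≤ E t := by unfold E; positivity

lemma E_int_Ioi : IntegrableOn E (Ioi 0) := by
  apply Integrable.mono (exp_neg_integrableOn_Ioi 0 (by norm_num : (0:ℝ) < 2))
    (E_cont.aestronglyMeasurable.restrict)
  filter_upwards [ae_restrict_mem measurableSet_Ioi] with x hx
  rw [Real.norm_eq_abs, Real.norm_eq_abs, abs_of_nonneg (E_nonneg x),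
    abs_of_nonneg (Real.exp_pos _).le]
  unfold E
  rw [div_le_iff₀ (by positivity)]
  have h1 : Real.exp (-2 * x) * (Real.exp x)^4 = (Real.exp x)^2 := by
    rw [show (-2:ℝ) * x = -(x+x) by ring, Real.exp_neg, Real.exp_add]
    have := (Real.exp_pos x).ne'
    field_simp
  calc (Real.exp x)^2 = Real.exp (-2*x) * (Real.exp x)^4 := h1.symm
    _ ≤ Real.exp (-2*x) * (1 + Real.exp x)^4 := by
        apply mul_le_mul_of_nonneg_left _ (Real.exp_pos _).le
        apply pow_le_pow_left₀ (Real.exp_pos _).le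
        linarith

lemma E_int_Iic : IntegrableOn E (Iic 0) := by
  apply Integrable.mono (integrableOn_exp_Iic 0) (E_cont.aestronglyMeasurable.restrict)
  filter_upwards [ae_restrict_mem measurableSet_Iic] with x hx
  rw [Real.norm_eq_abs, Real.norm_eq_abs, abs_of_nonneg (E_nonneg x),
    abs_of_nonneg (Real.exp_pos _).le]
  unfold E
  rw [div_le_iff₀ (by positivity)]
  have h1 : Real.exp x ≤ 1 := Real.exp_le_one_iff.mpr hx
  have h2 : (1:ℝ) ≤ (1 + Real.exp x)^4 := one_le_pow₀ (by linarith [(Real.exp_pos x).le])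
  nlinarith [Real.exp_pos x]

lemma E_int : Integrable E := by
  rw [← integrableOn_univ, ← Set.Iic_union_Ioi (a := (0:ℝ))]
  exact E_int_Iic.union E_int_Ioi

lemma E_integral : ∫ s, E s = 1/6 := by
  have hIoi : ∫ s in Ioi (0:ℝ), E s = 0 - g 0 :=
    integral_Ioi_of_hasDerivAt_of_tendsto' (fun x _ => hg_deriv x) E_int_Ioi g_top
  have hIic : ∫ s in Iic (0:ℝ), E s = g 0 - (-(1/6)) :=
    integral_Iic_of_hasDerivAt_of_tendsto' (fun x _ => hg_deriv x) E_int_Iic g_bot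
  have := integral_add_compl (measurableSet_Iic (a := (0:ℝ))) E_int
  rw [Set.compl_Iic] at this
  rw [← this, hIoi, hIic]
  ring

lemma lhs_value : ∫⁻ s, ENNReal.ofReal ((deriv q s)^2 / 2 + W (q s)) = ENNReal.ofReal (1/6) := by
  have h1 : ∀ s, ENNReal.ofReal ((deriv q s)^2 / 2 + W (q s)) = ENNReal.ofReal (E s) := by
    intro s; rw [integrand_q]
  simp_rw [h1]
  rw [← ofReal_integral_eq_lintegral_ofReal E_int (Eventually.of_forall E_nonneg), E_integral]

end AllenCahnAux

open AllenCahnAux Filter Set Real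

theorem q_minimizes_AllenCahn_energy (p : ℝ → ℝ)
    (hp : ContDiff ℝ 1 p)
    (hlim₁ : Filter.Tendsto p Filter.atBot (nhds 1))
    (hlim₂ : Filter.Tendsto p Filter.atTop (nhds 0)) :
    ∫⁻ s, ENNReal.ofReal ((deriv q s)^2 / 2 + W (q s)) ≤
      ∫⁻ s, ENNReal.ofReal ((deriv p s)^2 / 2 + W (p s)) := by
  rw [lhs_value]
  -- d is the derivative of G ∘ p where G u = u^2/2 - u^3/3
  set d : ℝ → ℝ := fun s => (p s - (p s)^2) * deriv p s with hd_def
  have hp_deriv : ∀ x, HasDerivAt p (deriv p x) x :=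
    fun x => (hp.differentiable one_ne_zero x).hasDerivAt
  have hdc : Continuous d := by
    apply Continuous.mul
    · exact (hp.continuous).sub ((hp.continuous).pow 2)
    · exact hp.continuous_deriv le_rfl
  -- pointwise bound : |d s| ≤ integrand
  have hpt : ∀ s, ENNReal.ofReal |d s| ≤ ENNReal.ofReal ((deriv p s)^2 / 2 + W (p s)) := by
    intro s
    apply ENNReal.ofReal_le_ofReal
    have hW : W (p s) = (p s - (p s)^2)^2 / 2 := by rw [W]; ring
    rw [hW, hd_def]
    rw [abs_le]
    constructor <;> nlinarith [sq_nonneg (deriv p s + (p s - (p s)^2)),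
      sq_nonneg (deriv p s - (p s - (p s)^2))]
  have hmono : ∫⁻ s, ENNReal.ofReal |d s| ≤ ∫⁻ s, ENNReal.ofReal ((deriv p s)^2 / 2 + W (p s)) :=
    lintegral_mono hpt
  by_cases htop : ∫⁻ s, ENNReal.ofReal |d s| = ⊤
  · rw [htop, top_le_iff] at hmono
    rw [hmono]
    exact le_top
  -- d is integrable
  have hd_int : Integrable d := by
    refine ⟨hdc.aestronglyMeasurable, ?_⟩
    rw [hasFiniteIntegral_iff_norm]
    simpa [Real.norm_eq_abs] using Ne.lt_top htop
  -- FTC : the antiderivative F = G ∘ p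
  set F : ℝ → ℝ := fun s => (p s)^2/2 - (p s)^3/3 with hF_def
  have hF_deriv : ∀ x, HasDerivAt F (d x) x := by
    intro x
    have h2 : HasDerivAt (fun u : ℝ => u^2/2 - u^3/3) (p x - (p x)^2) (p x) := by
      have := ((hasDerivAt_pow 2 (p x)).div_const 2).sub ((hasDerivAt_pow 3 (p x)).div_const 3)
      exact this.congr_deriv (by norm_num)
    have := h2.comp x (hp_deriv x)
    simpa [hd_def, hF_def, Function.comp_def] using this
  -- |F b - F a| ≤ ∫ |d| for all a ≤ b
  have hbound : ∀ n : ℕ, |F n - F (-(n:ℝ))| ≤ ∫ s, |d s| := by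
    intro n
    have hab : (-(n:ℝ)) ≤ (n:ℝ) := by
      have : (0:ℝ) ≤ n := n.cast_nonneg
      linarith
    have hFTC : ∫ x in (-(n:ℝ))..(n:ℝ), d x = F n - F (-(n:ℝ)) :=
      intervalIntegral.integral_eq_sub_of_hasDerivAt (fun x _ => hF_deriv x)
        hd_int.intervalIntegrable
    rw [← hFTC]
    calc |∫ x in (-(n:ℝ))..(n:ℝ), d x| ≤ ∫ x in (-(n:ℝ))..(n:ℝ), |d x| :=
          intervalIntegral.abs_integral_le_integral_abs hab
      _ = ∫ x in Ioc (-(n:ℝ)) (n:ℝ), |d x| := intervalIntegral.integral_of_le hab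
      _ ≤ ∫ s, |d s| := setIntegral_le_integral hd_int.abs
          (Eventually.of_forall fun x => abs_nonneg _)
  -- the bound tends to 1/6
  have hGcont : Continuous (fun u : ℝ => u^2/2 - u^3/3) := by continuity
  have htop' : Tendsto (fun n : ℕ => F (n:ℝ)) atTop (nhds 0) := by
    have h1 : Tendsto (fun n : ℕ => p (n:ℝ)) atTop (nhds 0) :=
      hlim₂.comp tendsto_natCast_atTop_atTop
    have := (hGcont.tendsto 0).comp h1
    simpa [hF_def, Function.comp_def] using this
  have hbot' : Tendsto (fun n : ℕ => F (-(n:ℝ))) atTop (nhds (1/6)) := by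
    have hneg : Tendsto (fun n : ℕ => -(n:ℝ)) atTop atBot :=
      tendsto_neg_atBot_iff.mpr tendsto_natCast_atTop_atTop
    have h1 : Tendsto (fun n : ℕ => p (-(n:ℝ))) atTop (nhds 1) := hlim₁.comp hneg
    have h2 := (hGcont.tendsto 1).comp h1
    simp only [Function.comp_def] at h2
    have : ((1:ℝ)^2/2 - (1:ℝ)^3/3) = 1/6 := by norm_num
    rw [this] at h2
    exact h2
  have hlim : Tendsto (fun n : ℕ => |F (n:ℝ) - F (-(n:ℝ))|) atTop (nhds (1/6)) := by
    have h := (htop'.sub hbot').abs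
    rw [zero_sub, abs_neg, abs_of_nonneg (by norm_num : (0:ℝ) ≤ 1/6)] at h
    exact h
  have hle : (1:ℝ)/6 ≤ ∫ s, |d s| :=
    le_of_tendsto hlim (Eventually.of_forall hbound)
  -- conclude
  calc ENNReal.ofReal (1/6) ≤ ENNReal.ofReal (∫ s, |d s|) := ENNReal.ofReal_le_ofReal hle
    _ = ∫⁻ s, ENNReal.ofReal |d s| :=
        ofReal_integral_eq_lintegral_ofReal hd_int.abs
          (Eventually.of_forall fun x => abs_nonneg _)
    _ ≤ _ := hmono
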